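/- (1) An m-monoid is extensional if and only if it is isomorphic to a canonical m-monoid. (2) Every finitely ranked m-monoid is extensional. -/

import Mathlib

universe u

open scoped Classical

/-- A finite permutation of ω: an element of S_ω, i.e. a permutation moving
only finitely many points. -/
def FinPerm (σ : Equiv.Perm ℕ) : Prop := {n : ℕ | σ n ≠ n}.Finite

/-- The raw operations of a merge algebra: the binary merges `⋆_n` and the
actions `σ̄` of (finite) permutations. -/
structure MergeOps (A : Type u) where
  star : ℕ → A → A → A
  bar : Equiv.Perm ℕ → A → A

namespace MergeOps

variable {A : Type u}

/-- `chain g k = ((g 0 ⋆_1 g 1) ⋆_2 g 2) … ⋆_k (g k)`. -/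
def chain (M : MergeOps A) (g : ℕ → A) : ℕ → A
  | 0 => g 0
  | i + 1 => M.star (i + 1) (M.chain g i) (g (i + 1))

/-- `chainStar g k y = ((…(g 0 ⋆_1 g 1) ⋆_2 …) ⋆_{k-1} g (k-1)) ⋆_k y`. -/
def chainStar (M : MergeOps A) (g : ℕ → A) (k : ℕ) (y : A) : A :=
  match k with
  | 0 => y
  | k + 1 => M.star (k + 1) (M.chain g k) y

/-- The `n`-coordinate of `x` relative to the coordinator `pt`:
`x[n] = τ̄^n_0(x) ⋆_1 pt`. -/
def coord (M : MergeOps A) (pt x : A) (n : ℕ) : A :=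
  M.star 1 (M.bar (Equiv.swap 0 n) x) pt

end MergeOps

/-- A merge algebra: operations `⋆_n` and `σ̄` satisfying axioms (B1)–(B7). -/
structure MergeAlgebra (A : Type u) extends MergeOps A where
  /-- (B1) each `⋆_n` is associative -/
  star_assoc : ∀ (n : ℕ) (x y z : A), star n (star n x y) z = star n x (star n y z)
  /-- (B1) each `⋆_n` is idempotent -/
  star_idem : ∀ (n : ℕ) (x : A), star n x x = x
  /-- (B2) -/
  star_zero : ∀ x y : A, star 0 x y = y
  /-- (B3), first part (k ≥ n) -/
  B3a : ∀ {n k : ℕ}, n ≤ k → ∀ x y z : A, star n (star k x y) z = star n x z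
  /-- (B3), second part (k ≥ n) -/
  B3b : ∀ {n k : ℕ}, n ≤ k → ∀ x y z : A, star k x (star n y z) = star k x z
  /-- (B4) (k < n) -/
  B4 : ∀ {n k : ℕ}, k < n → ∀ x y z : A, star n (star k x y) z = star k x (star n y z)
  /-- (B5) `σ̄(τ̄(x)) = (τ∘σ)‾(x)` -/
  B5 : ∀ σ τ : Equiv.Perm ℕ, FinPerm σ → FinPerm τ → ∀ x : A,
      bar σ (bar τ x) = bar (τ * σ) x
  /-- (B5) `ῑ(x) = x` -/
  bar_id : ∀ x : A, bar 1 x = x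
  /-- (B6): for `n ≤ k` and `σ` a permutation of `k`, with `f i = x` iff `σ i < n`:
  `σ̄(x ⋆_n y) = ((…(σ̄(f 0) ⋆_1 σ̄(f 1)) ⋆_2 …) ⋆_{k-1} σ̄(f (k-1))) ⋆_k y`. -/
  B6 : ∀ {n k : ℕ}, n ≤ k → ∀ σ : Equiv.Perm ℕ, (∀ i, k ≤ i → σ i = i) →
      ∀ x y : A, bar σ (star n x y) =
        toMergeOps.chainStar (fun i => bar σ (if σ i < n then x else y)) k y
  /-- (B7) -/
  B7 : ∀ {m n : ℕ} (σ τ : Equiv.Perm ℕ), FinPerm σ → FinPerm τ →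
      (∀ i, m ≤ i → i < n → σ i = τ i) →
      ∀ x y z : A, star n (star m z (bar σ x)) y = star n (star m z (bar τ x)) y

/-- An m-monoid: a monoid structure together with a merge algebra structure on
the same carrier, satisfying right distributivity (L1). -/
structure MMonoid (A : Type u) extends MergeAlgebra A where
  mul : A → A → A
  one : A
  mul_assoc : ∀ x y z : A, mul (mul x y) z = mul x (mul y z)
  one_mul : ∀ x : A, mul one x = x
  mul_one : ∀ x : A, mul x one = x
  /-- (L1) right distributivity -/
  L1 : ∀ (n : ℕ) (x y z : A), mul (star n x y) z = star n (mul x z) (mul y z)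

namespace MMonoid

variable {A : Type u} (M : MMonoid A)

/-- A cm-monoid is an m-monoid satisfying (L2): `σ̄(x)·y = σ̄(x·y)`. -/
def IsCM : Prop :=
  ∀ σ : Equiv.Perm ℕ, FinPerm σ → ∀ x y : A, M.mul (M.bar σ x) y = M.bar σ (M.mul x y)

/-- An am-monoid is an m-monoid satisfying (L3): `σ̄(x·y) = σ̄(x)·σ̄(y)`. -/
def IsAM : Prop :=
  ∀ σ : Equiv.Perm ℕ, FinPerm σ → ∀ x y : A, M.bar σ (M.mul x y) = M.mul (M.bar σ x) (M.bar σ y)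

/-- The `n`-coordinate `x[n] = τ̄^n_0(x) ⋆_1 1` (the coordinator is the unit). -/
def coord (x : A) (n : ℕ) : A := M.toMergeOps.coord M.one x n

/-- Extensionality: elements with the same coordinates are equal. -/
def Extensional : Prop := ∀ x y : A, (∀ n : ℕ, M.coord x n = M.coord y n) → x = y

/-- An element has rank ≤ n iff `x ⋆_n 1 = x`; the m-monoid is finitely ranked
if every element has finite rank. -/
def FinitelyRanked : Prop := ∀ x : A, ∃ n : ℕ, M.star n x M.one = x

/-- A degenerate m-monoid. -/
def Degenerate : Prop :=
  (∀ σ : Equiv.Perm ℕ, FinPerm σ → ∀ x : A, M.bar σ x = x) ∧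
    (∀ (n : ℕ) (x y : A), M.star n x y = y)

/-- `a` is finite dimensional: for every `n` there is `m` with
`(a·(1 ⋆_m b ⋆_{m+k} 1)) ⋆_n a = a` for all `b` and `k`. -/
def FinDimEl (a : A) : Prop :=
  ∀ n : ℕ, ∃ m : ℕ, ∀ (b : A) (k : ℕ),
    M.star n (M.mul a (M.star (m + k) (M.star m M.one b) M.one)) a = a

/-- `a` is ω-finite dimensional: for every `n` there is `m` with
`(a·(1 ⋆_m b)) ⋆_n a = a` for all `b`. -/
def OmegaFinDimEl (a : A) : Prop :=
  ∀ n : ℕ, ∃ m : ℕ, ∀ b : A,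
    M.star n (M.mul a (M.star m M.one b)) a = a

/-- An m-monoid is finite dimensional if every element is. -/
def FinDim : Prop := ∀ a : A, M.FinDimEl a

/-- An m-monoid is ω-finite dimensional if every element is. -/
def OmegaFinDim : Prop := ∀ a : A, M.OmegaFinDimEl a

end MMonoid

/-- An isomorphism of m-monoids: a bijection preserving the merges, the actions
of finite permutations, the multiplication and the unit. -/
structure MMonoidIso {A B : Type u} (M : MMonoid A) (N : MMonoid B) where
  toEquiv : A ≃ B
  map_star : ∀ (n : ℕ) (x y : A), toEquiv (M.star n x y) = N.star n (toEquiv x) (toEquiv y)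
  map_bar : ∀ σ : Equiv.Perm ℕ, FinPerm σ → ∀ x : A, toEquiv (M.bar σ x) = N.bar σ (toEquiv x)
  map_mul : ∀ x y : A, toEquiv (M.mul x y) = N.mul (toEquiv x) (toEquiv y)
  map_one : toEquiv M.one = N.one

section FinPermLemmas

lemma finPerm_one : FinPerm (1 : Equiv.Perm ℕ) := by
  simp [FinPerm]

lemma finPerm_mul {σ τ : Equiv.Perm ℕ} (hσ : FinPerm σ) (hτ : FinPerm τ) :
    FinPerm (σ * τ) := by
  apply (hσ.union hτ).subset
  intro n hn
  by_contra h
  simp only [Set.mem_union, Set.mem_setOf_eq, not_or, not_not] at h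
  exact hn (by simp [Equiv.Perm.mul_apply, h.2, h.1])

lemma finPerm_swap (a b : ℕ) : FinPerm (Equiv.swap a b) := by
  apply ((Set.finite_singleton b).insert a).subset
  intro n hn
  by_contra h
  simp only [Set.mem_insert_iff, Set.mem_singleton_iff, not_or] at h
  exact hn (Equiv.swap_apply_of_ne_of_ne h.1 h.2)

lemma finPerm_of_fix {σ : Equiv.Perm ℕ} {k : ℕ} (h : ∀ i, k ≤ i → σ i = i) :
    FinPerm σ := by
  apply (Set.finite_Iio k).subset
  intro n hn
  by_contra hc
  exact hn (h n (by simpa using hc))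

end FinPermLemmas

namespace MMonoid

variable {A : Type u} (M : MMonoid A)

lemma star1_chain (g : ℕ → A) (m : ℕ) (z : A) :
    M.star 1 (M.toMergeOps.chain g m) z = M.star 1 (g 0) z := by
  induction m with
  | zero => rfl
  | succ m ih => rw [MergeOps.chain, M.B3a (by omega)]; exact ih

lemma chain_const (g : ℕ → A) (w : A) (m : ℕ) (h : ∀ i ≤ m, g i = w) :
    M.toMergeOps.chain g m = w := by
  induction m with
  | zero => exact h 0 (le_refl 0)
  | succ m ih =>
      rw [MergeOps.chain, ih (fun i hi => h i (by omega)), h (m+1) le_rfl,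
        M.star_idem]

lemma coord_star (n i : ℕ) (x y : A) :
    M.coord (M.star n x y) i =
      if i < n then M.coord x i else M.coord y i := by
  set σ := Equiv.swap 0 i with hσdef
  obtain ⟨K, hK⟩ : ∃ K, max n (i+1) = K + 1 := ⟨max n (i+1) - 1, by omega⟩
  have hfix : ∀ j, K + 1 ≤ j → σ j = j := by
    intro j hj
    exact Equiv.swap_apply_of_ne_of_ne (by omega) (by omega)
  have h6 := M.B6 (n := n) (k := K+1) (by omega) σ hfix x y
  show M.star 1 (M.bar σ (M.star n x y)) M.one = _
  rw [h6]
  show M.star 1 (M.star (K+1) _ y) M.one = _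
  rw [M.B3a (by omega), star1_chain]
  have h0 : σ 0 = i := Equiv.swap_apply_left 0 i
  rw [h0]
  split_ifs with h <;> rfl

lemma coord_bar {σ : Equiv.Perm ℕ} (hσ : FinPerm σ) (x : A) (i : ℕ) :
    M.coord (M.bar σ x) i = M.coord x (σ i) := by
  show M.star 1 (M.bar (Equiv.swap 0 i) (M.bar σ x)) M.one = _
  rw [M.B5 _ _ (finPerm_swap 0 i) hσ]
  have h7 := M.B7 (m := 0) (n := 1) (σ * Equiv.swap 0 i) (Equiv.swap 0 (σ i))
    (finPerm_mul hσ (finPerm_swap 0 i)) (finPerm_swap 0 (σ i))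
    (fun j hj hj1 => by
      have : j = 0 := by omega
      subst this
      simp [Equiv.Perm.mul_apply])
    x M.one M.one
  rw [M.star_zero, M.star_zero] at h7
  exact h7


lemma starR (k : ℕ) (x : A) :
    M.star (k+1) x M.one =
      M.star (k+1) (M.star k x (M.bar (Equiv.swap 0 k) (M.coord x k))) M.one := by
  rcases Nat.eq_zero_or_pos k with hk | hk
  · subst hk
    have hc : M.coord x 0 = M.star 1 x M.one := by
      show M.star 1 (M.bar (Equiv.swap 0 0) x) M.one = _
      rw [show Equiv.swap 0 0 = (1 : Equiv.Perm ℕ) from Equiv.swap_self 0, M.bar_id]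
    rw [hc, M.star_zero, show Equiv.swap 0 0 = (1 : Equiv.Perm ℕ) from Equiv.swap_self 0,
      M.bar_id, M.star_assoc, M.star_idem]
  · -- k ≥ 1
    set σ := Equiv.swap 0 k with hσdef
    have hfix : ∀ j, k + 1 ≤ j → σ j = j := fun j hj =>
      Equiv.swap_apply_of_ne_of_ne (by omega) (by omega)
    have h6 := M.B6 (n := 1) (k := k+1) (by omega) σ hfix (M.bar σ x) M.one
    have hσk : σ k = 0 := Equiv.swap_apply_right 0 k
    have hgk : M.bar σ (if σ k < 1 then M.bar σ x else M.one) = x := by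
      rw [if_pos (by omega),
        M.B5 σ σ (finPerm_swap 0 k) (finPerm_swap 0 k), hσdef, Equiv.swap_mul_self,
        M.bar_id]
    set w := M.bar σ M.one with hw
    have hcoord : M.bar σ (M.coord x k) =
        M.star (k+1) (M.star k w x) M.one := by
      show M.bar σ (M.star 1 (M.bar σ x) M.one) = _
      rw [h6]
      obtain ⟨K, hK⟩ : ∃ K, k = K + 1 := ⟨k - 1, by omega⟩
      have hconst : M.toMergeOps.chain
          (fun i => M.bar σ (if σ i < 1 then M.bar σ x else M.one)) K = w := by
        apply M.chain_const
        intro i hi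
        have hine : σ i ≠ 0 := by
          intro h0
          have : i = k := σ.injective (by rw [h0, hσk])
          omega
        show M.bar σ (if σ i < 1 then M.bar σ x else M.one) = w
        rw [if_neg (by omega)]
      subst hK
      show M.star (K+1+1) (M.toMergeOps.chain _ (K+1)) M.one = _
      simp only [MergeOps.chain]
      rw [hgk, hconst]
    rw [hcoord]
    have inner : M.star (k+1) (M.star k w x) M.one
        = M.star k w (M.star (k+1) x M.one) := M.B4 (by omega) w x M.one
    rw [inner, ← M.star_assoc, M.B3a (le_refl k), ← M.B4 (Nat.lt_succ_self k),
      M.star_idem, M.star_assoc, M.star_idem]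

lemma rank_mono {n N : ℕ} (hn : n ≤ N) {x : A} (h : M.star n x M.one = x) :
    M.star N x M.one = x := by
  rcases eq_or_lt_of_le hn with h1 | h1
  · subst h1
    conv_lhs => rw [← h]
    rw [M.star_assoc, M.star_idem, h]
  · conv_lhs => rw [← h]
    rw [M.B4 h1, M.star_idem, h]

lemma extensional_of_finitelyRanked (hfr : M.FinitelyRanked) : M.Extensional := by
  intro x y hc
  obtain ⟨n, hx⟩ := hfr x
  obtain ⟨m, hy⟩ := hfr y
  have key : ∀ k, M.star k x M.one = M.star k y M.one := by
    intro k
    induction k with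
    | zero => rw [M.star_zero, M.star_zero]
    | succ k ih =>
        rw [M.starR k x, M.starR k y, hc k,
          ← M.B3a (le_refl k) x M.one, ih, M.B3a (le_refl k)]
  calc x = M.star (max n m) x M.one := (M.rank_mono (le_max_left n m) hx).symm
    _ = M.star (max n m) y M.one := key _
    _ = y := M.rank_mono (le_max_right n m) hy


/-- The coordinate map into `Seq(A)`. -/
def cmap : A → (ℕ → A) := fun x i => M.coord x i

/-- The sequence merge operations on the range of the coordinate map. -/
noncomputable def seqOps : MergeOps (Set.range M.cmap) where
  star n s u := ⟨fun i => if i < n then (s : ℕ → A) i else (u : ℕ → A) i, by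
    obtain ⟨a, ha⟩ := s.2
    obtain ⟨b, hb⟩ := u.2
    refine ⟨M.star n a b, funext fun i => ?_⟩
    show M.coord (M.star n a b) i = _
    rw [M.coord_star, ← ha, ← hb]
    split_ifs <;> rfl⟩
  bar σ s :=
    if h : FinPerm σ then
      ⟨fun i => (s : ℕ → A) (σ i), by
        obtain ⟨a, ha⟩ := s.2
        refine ⟨M.bar σ a, funext fun i => ?_⟩
        show M.coord (M.bar σ a) i = _
        rw [M.coord_bar h, ← ha]
        rfl⟩
    else s

lemma seqOps_star_apply (n : ℕ) (s u : Set.range M.cmap) (i : ℕ) :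
    (((M.seqOps).star n s u : Set.range M.cmap) : ℕ → A) i
      = if i < n then (s : ℕ → A) i else (u : ℕ → A) i := rfl

lemma seqOps_bar_coe {σ : Equiv.Perm ℕ} (h : FinPerm σ) (s : Set.range M.cmap) :
    (((M.seqOps).bar σ s : Set.range M.cmap) : ℕ → A) = fun i => (s : ℕ → A) (σ i) := by
  show ((if h' : FinPerm σ then _ else s : Set.range M.cmap) : ℕ → A) = _
  rw [dif_pos h]

end MMonoid

/-- Value of `chain` for sequence-style merge operations on a subtype. -/
lemma chain_val {B : Type u} {X : Set (ℕ → B)} (O : MergeOps X)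
    (hstar : ∀ (n : ℕ) (s u : X), ((O.star n s u : X) : ℕ → B)
      = fun i => if i < n then (s : ℕ → B) i else (u : ℕ → B) i)
    (g : ℕ → X) (m j : ℕ) :
    ((O.chain g m : X) : ℕ → B) j = ((g (min j m) : X) : ℕ → B) j := by
  induction m with
  | zero => simp [MergeOps.chain]
  | succ m ih =>
      show ((O.star (m+1) (O.chain g m) (g (m+1)) : X) : ℕ → B) j = _
      rw [hstar]
      show (if j < m + 1 then ((O.chain g m : X) : ℕ → B) j
        else ((g (m+1) : X) : ℕ → B) j) = _
      by_cases h : j < m + 1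
      · have h1 : min j (m+1) = min j m := by omega
        rw [if_pos h, ih, h1]
      · have h1 : min j (m+1) = m+1 := by omega
        rw [if_neg h, h1]

namespace MMonoid

variable {A : Type u} (M : MMonoid A)

/-- The sequence merge algebra on the range of the coordinate map. -/
noncomputable def seqMerge : MergeAlgebra (Set.range M.cmap) where
  toMergeOps := M.seqOps
  star_assoc n x y z := Subtype.ext (funext fun i => by
    simp only [seqOps_star_apply]
    split_ifs <;> rfl)
  star_idem n x := Subtype.ext (funext fun i => by
    simp only [seqOps_star_apply]
    split_ifs <;> rfl)
  star_zero x y := Subtype.ext (funext fun i => by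
    simp only [seqOps_star_apply]
    rw [if_neg (by omega)])
  B3a := fun {n k} h x y z => Subtype.ext (funext fun i => by
    simp only [seqOps_star_apply]
    split_ifs <;> first | rfl | omega)
  B3b := fun {n k} h x y z => Subtype.ext (funext fun i => by
    simp only [seqOps_star_apply]
    split_ifs <;> first | rfl | omega)
  B4 := fun {n k} h x y z => Subtype.ext (funext fun i => by
    simp only [seqOps_star_apply]
    split_ifs <;> first | rfl | omega)
  B5 := fun σ τ hσ hτ x => Subtype.ext (by
    rw [M.seqOps_bar_coe hσ, M.seqOps_bar_coe hτ, M.seqOps_bar_coe (finPerm_mul hτ hσ)]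
    funext i
    rfl)
  bar_id x := Subtype.ext (by
    rw [M.seqOps_bar_coe finPerm_one]
    funext i
    rfl)
  B6 := fun {n k} hnk σ hfix x y => by
    have hσf : FinPerm σ := finPerm_of_fix hfix
    apply Subtype.ext
    rw [M.seqOps_bar_coe hσf]
    funext j
    simp only [seqOps_star_apply]
    cases k with
    | zero =>
        show _ = ((y : Set.range M.cmap) : ℕ → A) j
        have hn : n = 0 := by omega
        have hj : σ j = j := hfix j (by omega)
        rw [hj, hn, if_neg (by omega)]
    | succ K =>
        show _ = (((M.seqOps).star (K+1) ((M.seqOps).chain _ K) y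
          : Set.range M.cmap) : ℕ → A) j
        rw [seqOps_star_apply]
        by_cases hj : j < K + 1
        · rw [if_pos hj, chain_val M.seqOps (fun n s u => rfl)]
          have hmin : min j K = j := by omega
          rw [hmin]
          show _ = (((M.seqOps).bar σ (if σ j < n then x else y)
            : Set.range M.cmap) : ℕ → A) j
          rw [M.seqOps_bar_coe hσf]
          show _ = ((if σ j < n then x else y : Set.range M.cmap) : ℕ → A) (σ j)
          rw [apply_ite (fun s : Set.range M.cmap => (s : ℕ → A) (σ j))]
        · have hfj : σ j = j := hfix j (by omega)
          rw [if_neg hj, hfj, if_neg (by omega)]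
  B7 := fun {m n} σ τ hσ hτ hagree x y z => Subtype.ext (funext fun i => by
    simp only [seqOps_star_apply]
    by_cases h1 : i < n
    · by_cases h2 : i < m
      · rw [if_pos h1, if_pos h1, if_pos h2, if_pos h2]
      · rw [if_pos h1, if_pos h1, if_neg h2, if_neg h2,
          M.seqOps_bar_coe hσ, M.seqOps_bar_coe hτ]
        show (x : ℕ → A) (σ i) = (x : ℕ → A) (τ i)
        rw [hagree i (by omega) h1]
    · rw [if_neg h1, if_neg h1])

end MMonoid

section Canon

variable {A : Type u} (M : MMonoid A) (hinj : Function.Injective M.cmap)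

lemma MMonoid.cmap_star_compat (n : ℕ) (a b : A) :
    (Equiv.ofInjective M.cmap hinj) (M.star n a b)
      = (M.seqOps).star n ((Equiv.ofInjective M.cmap hinj) a)
          ((Equiv.ofInjective M.cmap hinj) b) := by
  apply Subtype.ext
  funext i
  rw [M.seqOps_star_apply]
  show M.coord (M.star n a b) i = _
  rw [M.coord_star]
  split_ifs <;> rfl

lemma MMonoid.cmap_star_compat' (n : ℕ) (s u : Set.range M.cmap) :
    (Equiv.ofInjective M.cmap hinj).symm ((M.seqOps).star n s u)
      = M.star n ((Equiv.ofInjective M.cmap hinj).symm s)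
          ((Equiv.ofInjective M.cmap hinj).symm u) := by
  set e := Equiv.ofInjective M.cmap hinj
  have h := M.cmap_star_compat hinj n (e.symm s) (e.symm u)
  rw [Equiv.apply_symm_apply, Equiv.apply_symm_apply] at h
  rw [← h, Equiv.symm_apply_apply]

/-- The canonical m-monoid isomorphic to `M`. -/
noncomputable def MMonoid.canonN : MMonoid (Set.range M.cmap) where
  toMergeAlgebra := M.seqMerge
  mul s u := (Equiv.ofInjective M.cmap hinj)
    (M.mul ((Equiv.ofInjective M.cmap hinj).symm s) ((Equiv.ofInjective M.cmap hinj).symm u))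
  one := (Equiv.ofInjective M.cmap hinj) M.one
  mul_assoc x y z := by
    simp only [Equiv.symm_apply_apply]
    rw [M.mul_assoc]
  one_mul x := by
    simp only [Equiv.symm_apply_apply]
    rw [M.one_mul, Equiv.apply_symm_apply]
  mul_one x := by
    simp only [Equiv.symm_apply_apply]
    rw [M.mul_one, Equiv.apply_symm_apply]
  L1 n x y z := by
    show (Equiv.ofInjective M.cmap hinj)
        (M.mul ((Equiv.ofInjective M.cmap hinj).symm ((M.seqOps).star n x y)) _) = _
    rw [M.cmap_star_compat' hinj, M.L1, M.cmap_star_compat hinj]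
    rfl

/-- The isomorphism from `M` to its canonical m-monoid. -/
noncomputable def MMonoid.canonIso : MMonoidIso M (M.canonN hinj) where
  toEquiv := Equiv.ofInjective M.cmap hinj
  map_star n x y := M.cmap_star_compat hinj n x y
  map_bar σ hσ x := by
    apply Subtype.ext
    rw [show (M.canonN hinj).bar = (M.seqOps).bar from rfl, M.seqOps_bar_coe hσ]
    funext i
    show M.coord (M.bar σ x) i = _
    rw [M.coord_bar hσ]
    rfl
  map_mul x y := by
    show _ = (Equiv.ofInjective M.cmap hinj) (M.mul _ _)
    rw [Equiv.symm_apply_apply, Equiv.symm_apply_apply]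
  map_one := rfl

end Canon

/-- STATEMENT 6: (1) an m-monoid is extensional iff it is isomorphic to a
canonical m-monoid (an m-monoid whose carrier is a merge subalgebra of some
`Seq(B)`, with the sequence merge operations); (2) every finitely ranked
m-monoid is extensional. -/
theorem extensional_iff_canonical {A : Type u} (M : MMonoid A) :
    (M.Extensional ↔
      ∃ (B : Type u) (X : Set (ℕ → B)) (N : MMonoid X),
        (∀ (n : ℕ) (s u : X),
          ((N.star n s u : X) : ℕ → B) = fun i => if i < n then (s : ℕ → B) i else (u : ℕ → B) i) ∧
        (∀ σ : Equiv.Perm ℕ, FinPerm σ → ∀ s : X,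
          ((N.bar σ s : X) : ℕ → B) = fun i => (s : ℕ → B) (σ i)) ∧
        Nonempty (MMonoidIso M N)) ∧
    (M.FinitelyRanked → M.Extensional) := by
  constructor
  · constructor
    · intro hext
      have hinj : Function.Injective M.cmap := fun x y h =>
        hext x y (fun n => congrFun h n)
      refine ⟨A, Set.range M.cmap, M.canonN hinj, ?_, ?_, ⟨M.canonIso hinj⟩⟩
      · intro n s u
        rfl
      · intro σ hσ s
        exact M.seqOps_bar_coe hσ s
    · rintro ⟨B, X, N, hstar, hbar, ⟨φ⟩⟩
      intro x y hc
      have hval : ∀ (s : X) (k : ℕ), ((N.coord s k : X) : ℕ → B) 0 = (s : ℕ → B) k := by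
        intro s k
        show ((N.star 1 (N.bar (Equiv.swap 0 k) s) N.one : X) : ℕ → B) 0 = _
        rw [hstar]
        show (if (0:ℕ) < 1 then ((N.bar (Equiv.swap 0 k) s : X) : ℕ → B) 0
          else ((N.one : X) : ℕ → B) 0) = _
        rw [if_pos (by omega), hbar _ (finPerm_swap 0 k)]
        show (s : ℕ → B) ((Equiv.swap 0 k) 0) = _
        rw [Equiv.swap_apply_left]
      have hφc : ∀ (z : A) (k : ℕ), φ.toEquiv (M.coord z k) = N.coord (φ.toEquiv z) k := by
        intro z k
        show φ.toEquiv (M.star 1 (M.bar (Equiv.swap 0 k) z) M.one)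
          = N.star 1 (N.bar (Equiv.swap 0 k) (φ.toEquiv z)) N.one
        rw [φ.map_star, φ.map_bar _ (finPerm_swap 0 k), φ.map_one]
      apply φ.toEquiv.injective
      apply Subtype.ext
      funext k
      rw [← hval (φ.toEquiv x) k, ← hval (φ.toEquiv y) k, ← hφc, ← hφc, hc k]
  · exact M.extensional_of_finitelyRanked
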